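/- Let c ≥ 1 and d ≥ 0 be integers. For every integer m ≥ 0, the map μ_m : 𝓛_std^(m) → Mon(F_m) sending w to x^u e_π, where η(w) = (x^u,(π(1),…,π(d))), is a bijection; consequently μ : 𝓛_std → Mon(F) is a bijection. More precisely, if x^u e_π = x_{•,1}^{u_1}⋯x_{•,m}^{u_m} e_π ∈ Mon(F_m) (with u_k ∈ ℕ^c the exponents of the width-k variables), then the unique word w ∈ 𝓛_std^(m) with μ(w) = x^u e_π is w = ξ^{u_1} τ_{ι(1)} ξ^{u_2} τ_{ι(2)} ⋯ ξ^{u_m} τ_{ι(m)}, where ξ^a denotes ξ_1^{a_1}⋯ξ_c^{a_c} for a ∈ ℕ^c, and ι(k) = 0 if π(d) < k ≤ m, while ι(k) = j if π(j−1) < k ≤ π(j) (with the convention π(0) = 0). -/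

import Mathlib

noncomputable section
open scoped Computability

/-- The alphabet `Σ = {ξ_1,…,ξ_c, τ_0,…,τ_d}`. -/
inductive Letter (c d : ℕ) : Type
  | xi : Fin c → Letter c d
  | tau : Fin (d + 1) → Letter c d
deriving DecidableEq

/-- A word is *standard* if in every occurrence of two consecutive ξ-letters
`ξ_i ξ_j` one has `i ≤ j`. -/
def Standard {c d : ℕ} : List (Letter c d) → Prop :=
  List.Chain' fun a b => ∀ i j : Fin c, a = Letter.xi i → b = Letter.xi j → (i : ℕ) ≤ (j : ℕ)

/-- A *simple* word contains no τ-letters. -/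
def SimpleWord {c d : ℕ} (w : List (Letter c d)) : Prop :=
  ∀ a ∈ w, ∃ i, a = Letter.xi i

/-- Test for τ-letters. -/
def isTau {c d : ℕ} : Letter c d → Bool
  | Letter.tau _ => true
  | Letter.xi _ => false

/-- The number of τ-letters occurring in a word. -/
def tauCount {c d : ℕ} (w : List (Letter c d)) : ℕ := (w.filter isTau).length

/-- The language of one-letter words with letter drawn from `S`. -/
def letterLang {c d : ℕ} (S : Set (Letter c d)) : Language (Letter c d) :=
  {w | ∃ a ∈ S, w = [a]}

/-- The set of ξ-letters. -/
def xiSet (c d : ℕ) : Set (Letter c d) := Set.range Letter.xi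

/-- The language `𝓛_j = {ξ_1,…,ξ_c, τ_j}*`. -/
def LL (c d : ℕ) (j : Fin (d + 1)) : Language (Letter c d) :=
  (letterLang (xiSet c d ∪ {Letter.tau j}))∗

/-- The language `𝓛̄_j = ({ξ_1,…,ξ_c}* τ_j)*`. -/
def LLbar (c d : ℕ) (j : Fin (d + 1)) : Language (Letter c d) :=
  ((letterLang (xiSet c d))∗ * ({[Letter.tau j]} : Language (Letter c d)))∗

/-- The language `𝓛 = 𝓛_1 τ_1 𝓛_2 τ_2 ⋯ 𝓛_d τ_d 𝓛̄_0`. -/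
def LFull (c d : ℕ) : Language (Letter c d) :=
  (((List.finRange d).map fun j : Fin d =>
      LL c d j.succ * ({[Letter.tau j.succ]} : Language (Letter c d))).prod) * LLbar c d 0

/-- The language `𝓛_std` of standard words of `𝓛`. -/
def LStd (c d : ℕ) : Language (Letter c d) :=
  {w | w ∈ LFull c d ∧ Standard w}

/-- Monomials of `P = (X^{OI,1})^{⊗c}` (of arbitrary width), encoded by their exponent
vectors: `u (i, l)` is the exponent of the variable `x_{i,l+1}`. -/
abbrev MonP (c : ℕ) : Type := (Fin c × ℕ) →₀ ℕ

/-- Shift all variables one column to the right: `x_{k,l} ↦ x_{k,l+1}`. -/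
def shiftMon {c : ℕ} (u : MonP c) : MonP c :=
  Finsupp.mapDomain (fun v : Fin c × ℕ => (v.1, v.2 + 1)) u

/-- The shifting operator `T_i`: on the monomial it sends `x_{k,l} ↦ x_{k,l+1}`
(multiplicatively), and on a tuple `(p_1,…,p_d)` it adds `1` to `p_j` for `j ≥ i`
(1-based `j`), while `T_0` leaves the tuple unchanged. -/
def TOp {c d : ℕ} (i : Fin (d + 1)) (q : MonP c × (Fin d → ℕ)) : MonP c × (Fin d → ℕ) :=
  (shiftMon q.1,
    fun k => if 1 ≤ (i : ℕ) ∧ (i : ℕ) ≤ (k : ℕ) + 1 then q.2 k + 1 else q.2 k)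

/-- The map `η : Σ* → Mon(P) × ℕ^d`:  `η(e) = (1,(0,…,0))`, `η(ξ_i w) = x_{i,1}·η(w)`,
`η(τ_i w) = T_i(η(w))`. -/
def eta {c d : ℕ} : List (Letter c d) → MonP c × (Fin d → ℕ)
  | [] => (0, fun _ => 0)
  | Letter.xi i :: w => (Finsupp.single ((i : Fin c), (0 : ℕ)) 1 + (eta w).1, (eta w).2)
  | Letter.tau i :: w => TOp i (eta w)


/-- The set of monomials `x^u e_π` of the width-`m` component `F_m` of the free OI-module
`F^{OI,d}`, encoded as pairs `(u, p)` where `u (i,l)` is the exponent of `x_{i,l+1}`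
(so all variables have column `≤ m`) and `p = (π(1),…,π(d))` is a strictly increasing
tuple with values in `{1,…,m}`. -/
def MonFSet (c d m : ℕ) : Set (MonP c × (Fin d → ℕ)) :=
  {q | (∀ v ∈ q.1.support, v.2 < m) ∧ StrictMono q.2 ∧ ∀ k, 1 ≤ q.2 k ∧ q.2 k ≤ m}

/-- The standard simple word `ξ^a = ξ_1^{a_1} ⋯ ξ_c^{a_c}`. -/
def xiWord (c d : ℕ) (a : Fin c → ℕ) : List (Letter c d) :=
  ((List.finRange c).map fun i => List.replicate (a i) (Letter.xi i : Letter c d)).flatten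

/-- The index `ι(k+1)` attached to the (1-based) column `k+1`:
`ι(k+1) = j` if `π(j-1) < k+1 ≤ π(j)` and `ι(k+1) = 0` if `π(d) < k+1`. -/
def iotaIdx {d : ℕ} (p : Fin d → ℕ) (k : ℕ) : Fin (d + 1) :=
  if h : (Finset.univ.filter fun j : Fin d => k + 1 ≤ p j).Nonempty
  then ((Finset.univ.filter fun j : Fin d => k + 1 ≤ p j).min' h).succ
  else 0

/-- The word `ξ^{u_1} τ_{ι(1)} ξ^{u_2} τ_{ι(2)} ⋯ ξ^{u_m} τ_{ι(m)}` associated to a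
monomial `x^u e_π` of `F_m`. -/
def canonWord (c d m : ℕ) (u : MonP c) (p : Fin d → ℕ) : List (Letter c d) :=
  ((List.range m).map fun k =>
    xiWord c d (fun i => u (i, k)) ++ [Letter.tau (iotaIdx p k)]).flatten


namespace MuAux

open List

variable {c d : ℕ}

/-! ### The chain relation -/

def Rel (c d : ℕ) : Letter c d → Letter c d → Prop :=
  fun a b => ∀ i j : Fin c, a = Letter.xi i → b = Letter.xi j → (i : ℕ) ≤ (j : ℕ)

lemma standard_def (w : List (Letter c d)) : Standard w ↔ List.Chain' (Rel c d) w := Iff.rfl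

lemma rel_tau_left (t : Fin (d + 1)) (b : Letter c d) : Rel c d (Letter.tau t) b := by
  intro i j h1 _; cases h1

lemma rel_tau_right (a : Letter c d) (t : Fin (d + 1)) : Rel c d a (Letter.tau t) := by
  intro i j _ h2; cases h2

lemma sub_lt_succ (d r : ℕ) : d - r < d + 1 := Nat.lt_succ_of_le (Nat.sub_le d r)

lemma sub1_lt {d r : ℕ} (h : r + 1 ≤ d) : d - r - 1 < d :=
  lt_of_lt_of_le (Nat.sub_lt (by omega) Nat.one_pos) (Nat.sub_le d r)

/-! ### `embed` and `eta` on simple words -/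

def embed (c : ℕ) (a : Fin c → ℕ) : MonP c :=
  ∑ i : Fin c, Finsupp.single ((i : Fin c), (0 : ℕ)) (a i)

lemma embed_apply (a : Fin c → ℕ) (i : Fin c) (l : ℕ) :
    embed c a (i, l) = if l = 0 then a i else 0 := by
  rw [embed, Finsupp.finset_sum_apply]
  rcases eq_or_ne l 0 with rfl | hl
  · rw [if_pos rfl, Finset.sum_eq_single i]
    · simp
    · intro b _ hb; simp [Finsupp.single_apply, Prod.ext_iff, hb]
    · simp
  · rw [if_neg hl]
    apply Finset.sum_eq_zero
    intro b _
    simp [Finsupp.single_apply, Prod.ext_iff, Ne.symm hl]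

lemma eta_nil : eta ([] : List (Letter c d)) = (0, fun _ => 0) := rfl

lemma eta_xi (i : Fin c) (w : List (Letter c d)) :
    eta (Letter.xi i :: w) = (Finsupp.single ((i : Fin c), (0 : ℕ)) 1 + (eta w).1, (eta w).2) := rfl

lemma eta_tau (t : Fin (d + 1)) (w : List (Letter c d)) :
    eta (Letter.tau t :: w) = TOp t (eta w) := rfl

lemma embed_count_cons (i0 : Fin c) (idx : List (Fin c)) :
    embed c (fun i => (i0 :: idx).count i) =
      Finsupp.single ((i0 : Fin c), (0 : ℕ)) 1 + embed c (fun i => idx.count i) := by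
  ext v
  obtain ⟨i, l⟩ := v
  rw [Finsupp.add_apply, embed_apply, embed_apply, Finsupp.single_apply]
  by_cases h1 : l = 0
  · subst h1
    rw [if_pos rfl, if_pos rfl]
    by_cases h2 : i = i0
    · subst h2
      simp [List.count_cons, Nat.add_comm]
    · simp [List.count_cons, h2, Ne.symm h2, Prod.ext_iff]
  · rw [if_neg h1, if_neg h1,
      if_neg (show ¬((i0, (0 : ℕ)) = (i, l)) from fun hcon => h1 ((congrArg Prod.snd hcon).symm)),
      zero_add]

lemma embed_zero : embed c (fun _ => 0) = 0 := by
  simp [embed]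

lemma eta_map_xi_append (idx : List (Fin c)) (w : List (Letter c d)) :
    eta (idx.map Letter.xi ++ w) =
      (embed c (fun i => idx.count i) + (eta w).1, (eta w).2) := by
  induction idx with
  | nil =>
      simp only [List.map_nil, List.nil_append, List.count_nil]
      rw [embed_zero, zero_add]
  | cons i0 idx ih =>
      simp only [List.map_cons, List.cons_append, eta_xi, ih, embed_count_cons]
      rw [← add_assoc]

/-! ### Sorted lists of indices -/

def sl (a : Fin c → ℕ) : List (Fin c) :=
  ((List.finRange c).map fun i => List.replicate (a i) i).flatten

lemma count_flatten_rep (a : Fin c → ℕ) (i : Fin c) (L : List (Fin c)) (hL : L.Nodup) :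
    ((L.map fun j => List.replicate (a j) j).flatten.count i) = if i ∈ L then a i else 0 := by
  induction L with
  | nil => simp
  | cons j L ih =>
      simp only [List.map_cons, List.flatten_cons, List.count_append]
      rw [ih (List.Nodup.of_cons hL)]
      rcases eq_or_ne i j with rfl | hij
      · have hnot : i ∉ L := (List.nodup_cons.mp hL).1
        simp [List.count_replicate, hnot]
      · simp [List.count_replicate, hij, Ne.symm hij, List.mem_cons]

lemma count_sl (a : Fin c → ℕ) (i : Fin c) : (sl a).count i = a i := by
  rw [sl, count_flatten_rep a i _ (List.nodup_finRange c), if_pos (List.mem_finRange i)]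

lemma sorted_sl (a : Fin c → ℕ) : (sl a).Pairwise (· ≤ ·) := by
  rw [sl, List.pairwise_flatten]
  constructor
  · intro l hl
    simp only [List.mem_map] at hl
    obtain ⟨j, _, rfl⟩ := hl
    simp [List.pairwise_replicate]
  · rw [List.pairwise_map]
    refine (List.pairwise_lt_finRange c).imp ?_
    intro j1 j2 h x hx y hy
    rw [List.eq_of_mem_replicate hx, List.eq_of_mem_replicate hy]
    exact le_of_lt h

lemma eq_sl_of_sorted (idx : List (Fin c)) (h : idx.Pairwise (· ≤ ·)) :
    idx = sl fun i => idx.count i := by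
  refine List.Perm.eq_of_pairwise' h (sorted_sl _) ?_
  rw [List.perm_iff_count]
  intro i; rw [count_sl]

lemma xiWord_eq (a : Fin c → ℕ) : xiWord c d a = (sl a).map Letter.xi := by
  rw [xiWord, sl, List.map_flatten, List.map_map]
  congr 1
  apply List.map_congr_left
  intro i _
  simp [List.map_replicate]

/-! ### Simple words -/

lemma simple_exists_map {v : List (Letter c d)} (hv : SimpleWord v) :
    ∃ idx : List (Fin c), v = idx.map Letter.xi := by
  induction v with
  | nil => exact ⟨[], rfl⟩
  | cons a v ih =>
      obtain ⟨i, rfl⟩ := hv a List.mem_cons_self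
      obtain ⟨idx, rfl⟩ := ih fun b hb => hv b (List.mem_cons_of_mem _ hb)
      exact ⟨i :: idx, rfl⟩

lemma chain_idx_of_standard {idx : List (Fin c)} (h : List.Chain' (Rel c d) (idx.map Letter.xi)) :
    idx.Pairwise (· ≤ ·) := by
  rw [← List.isChain_iff_pairwise]
  rw [List.Chain', List.isChain_map] at h
  refine h.imp ?_
  intro a b hab
  exact Fin.le_def.mpr (hab a b rfl rfl)

lemma eta_xiWord_append (a : Fin c → ℕ) (w : List (Letter c d)) :
    eta (xiWord c d a ++ w) = (embed c a + (eta w).1, (eta w).2) := by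
  rw [xiWord_eq, eta_map_xi_append]
  have h : (fun i => (sl a).count i) = a := funext fun i => count_sl a i
  rw [h]

lemma simple_standard_eq_xiWord {v : List (Letter c d)} (hv : SimpleWord v)
    (hs : List.Chain' (Rel c d) v) :
    ∃ a : Fin c → ℕ, v = xiWord c d a ∧
      ∀ w : List (Letter c d), eta (v ++ w) = (embed c a + (eta w).1, (eta w).2) := by
  obtain ⟨idx, rfl⟩ := simple_exists_map hv
  refine ⟨fun i => idx.count i, ?_, fun w => eta_map_xi_append idx w⟩
  rw [xiWord_eq]
  congr 1
  exact eq_sl_of_sorted idx (chain_idx_of_standard hs)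

lemma xiWord_simple (a : Fin c → ℕ) : SimpleWord (xiWord c d a) := by
  rw [xiWord_eq]
  intro x hx
  rw [List.mem_map] at hx
  obtain ⟨i, _, rfl⟩ := hx
  exact ⟨i, rfl⟩

lemma xiWord_chain (a : Fin c → ℕ) : List.Chain' (Rel c d) (xiWord c d a) := by
  rw [xiWord_eq, List.Chain', List.isChain_map]
  refine ((List.isChain_iff_pairwise).mpr (sorted_sl a)).imp ?_
  intro x y hxy i j hi hj
  injection hi with h1
  injection hj with h2
  subst h1; subst h2
  exact hxy

/-! ### tauCount -/

lemma tauCount_append (w1 w2 : List (Letter c d)) :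
    tauCount (w1 ++ w2) = tauCount w1 + tauCount w2 := by
  simp [tauCount, List.filter_append]

lemma tauCount_map_xi (idx : List (Fin c)) : tauCount (d := d) (idx.map Letter.xi) = 0 := by
  induction idx with
  | nil => rfl
  | cons i idx ih => simpa [tauCount, List.filter_cons, isTau] using ih

lemma tauCount_xiWord (a : Fin c → ℕ) : tauCount (xiWord c d a) = 0 := by
  rw [xiWord_eq]; exact tauCount_map_xi _

lemma tauCount_single_tau (t : Fin (d + 1)) : tauCount (c := c) [Letter.tau t] = 1 := rfl

/-! ### shiftMon / downShift -/

lemma shift_inj : Function.Injective (fun v : Fin c × ℕ => (v.1, v.2 + 1)) := by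
  rintro ⟨i, l⟩ ⟨i', l'⟩ h
  simp only [Prod.mk.injEq] at h ⊢
  exact ⟨h.1, by omega⟩

lemma shiftMon_apply_succ (u : MonP c) (i : Fin c) (l : ℕ) :
    shiftMon u (i, l + 1) = u (i, l) :=
  Finsupp.mapDomain_apply shift_inj u (i, l)

lemma shiftMon_apply_zero (u : MonP c) (i : Fin c) : shiftMon u (i, 0) = 0 := by
  apply Finsupp.mapDomain_notin_range
  rintro ⟨⟨i', l'⟩, h⟩
  simp only [Prod.mk.injEq] at h
  omega

def downShift (u : MonP c) : MonP c :=
  Finsupp.comapDomain (fun v : Fin c × ℕ => (v.1, v.2 + 1)) u shift_inj.injOn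

lemma downShift_apply (u : MonP c) (i : Fin c) (l : ℕ) : downShift u (i, l) = u (i, l + 1) :=
  Finsupp.comapDomain_apply _ _ _ _

/-! ### iotaIdx -/

lemma iotaIdx_congr {p q : Fin d → ℕ} {k k' : ℕ}
    (h : ∀ j, k + 1 ≤ p j ↔ k' + 1 ≤ q j) : iotaIdx p k = iotaIdx q k' := by
  have hf : (Finset.univ.filter fun j : Fin d => k + 1 ≤ p j)
      = Finset.univ.filter fun j : Fin d => k' + 1 ≤ q j := by
    ext j; simpa using h j
  simp only [iotaIdx, hf]

lemma iotaIdx_sub (p : Fin d → ℕ) (k : ℕ) :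
    iotaIdx (fun j => p j - 1) k = iotaIdx p (k + 1) :=
  iotaIdx_congr fun j => by omega

lemma iotaIdx_zero (p : Fin d → ℕ) (h : ∀ j, p j = 0) (k : ℕ) : iotaIdx p k = 0 := by
  rw [iotaIdx, dif_neg]
  rw [Finset.not_nonempty_iff_eq_empty, Finset.filter_eq_empty_iff]
  intro j _
  have := h j
  omega

lemma iotaIdx_eq (t : Fin (d + 1)) (ht : 1 ≤ (t : ℕ)) (p : Fin d → ℕ)
    (h : ∀ j : Fin d, 1 ≤ p j ↔ (t : ℕ) ≤ (j : ℕ) + 1) : iotaIdx p 0 = t := by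
  have htd : (t : ℕ) - 1 < d := by
    have := t.isLt
    omega
  have hmem : (⟨(t : ℕ) - 1, htd⟩ : Fin d) ∈ Finset.univ.filter fun j : Fin d => 0 + 1 ≤ p j := by
    simp only [Finset.mem_filter, Finset.mem_univ, true_and, zero_add]
    rw [h ⟨(t : ℕ) - 1, htd⟩]
    show (t : ℕ) ≤ ((t : ℕ) - 1) + 1
    omega
  have hne : (Finset.univ.filter fun j : Fin d => 0 + 1 ≤ p j).Nonempty := ⟨_, hmem⟩
  rw [iotaIdx, dif_pos hne]
  have hmin : (Finset.univ.filter fun j : Fin d => 0 + 1 ≤ p j).min' hne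
      = (⟨(t : ℕ) - 1, htd⟩ : Fin d) := by
    refine le_antisymm (Finset.min'_le _ _ hmem) ?_
    refine Finset.le_min' _ _ _ ?_
    intro y hy
    simp only [Finset.mem_filter, Finset.mem_univ, true_and, zero_add] at hy
    rw [h y] at hy
    rw [Fin.le_def]
    show (t : ℕ) - 1 ≤ (y : ℕ)
    omega
  rw [hmin]
  apply Fin.ext
  simp only [Fin.val_succ]
  omega

/-! ### canonWord recursion -/

lemma canonWord_zero (u : MonP c) (p : Fin d → ℕ) : canonWord c d 0 u p = [] := by
  simp [canonWord]

lemma canonWord_succ (m : ℕ) (u : MonP c) (p : Fin d → ℕ) :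
    canonWord c d (m + 1) u p =
      xiWord c d (fun i => u (i, 0)) ++ [Letter.tau (iotaIdx p 0)] ++
        ((List.range m).map fun k =>
          xiWord c d (fun i => u (i, k + 1)) ++ [Letter.tau (iotaIdx p (k + 1))]).flatten := by
  rw [canonWord, List.range_succ_eq_map, List.map_cons, List.flatten_cons, List.map_map]
  rfl

lemma canonWord_succ_eq (m : ℕ) (u : MonP c) (p : Fin d → ℕ) (u' : MonP c) (p' : Fin d → ℕ)
    (hu : ∀ (i : Fin c) (k : ℕ), u' (i, k) = u (i, k + 1))
    (hp : ∀ k, iotaIdx p' k = iotaIdx p (k + 1)) :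
    canonWord c d (m + 1) u p =
      xiWord c d (fun i => u (i, 0)) ++ [Letter.tau (iotaIdx p 0)] ++ canonWord c d m u' p' := by
  rw [canonWord_succ]
  congr 1
  rw [canonWord]
  congr 1
  apply List.map_congr_left
  intro k _
  have h1 : (fun i : Fin c => u (i, k + 1)) = fun i => u' (i, k) := funext fun i => (hu i k).symm
  rw [h1, hp k]

/-! ### standardness and tauCount of canonWord -/

lemma standard_block_append {v rest : List (Letter c d)} (t : Fin (d + 1))
    (hv : List.Chain' (Rel c d) v) (hrest : List.Chain' (Rel c d) rest) :
    List.Chain' (Rel c d) (v ++ [Letter.tau t] ++ rest) := by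
  rw [List.append_assoc, List.Chain', List.isChain_append]
  refine ⟨hv, ?_, ?_⟩
  · rw [List.singleton_append, List.isChain_cons]
    exact ⟨fun y _ => rel_tau_left t y, hrest⟩
  · intro x _ y hy
    rw [List.singleton_append, List.head?_cons, Option.mem_def, Option.some.injEq] at hy
    subst hy
    exact rel_tau_right x t

lemma standard_canonWord (m : ℕ) (u : MonP c) (p : Fin d → ℕ) :
    Standard (canonWord c d m u p) := by
  rw [standard_def]
  induction m generalizing u p with
  | zero => rw [canonWord_zero]; exact List.isChain_nil
  | succ m ih =>
      rw [canonWord_succ_eq m u p (downShift u) (fun j => p j - 1)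
        (fun i k => downShift_apply u i k) (iotaIdx_sub p)]
      exact standard_block_append _ (xiWord_chain _) (ih _ _)

lemma tauCount_canonWord (m : ℕ) (u : MonP c) (p : Fin d → ℕ) :
    tauCount (canonWord c d m u p) = m := by
  induction m generalizing u p with
  | zero => rw [canonWord_zero]; rfl
  | succ m ih =>
      rw [canonWord_succ_eq m u p (downShift u) (fun j => p j - 1)
        (fun i k => downShift_apply u i k) (iotaIdx_sub p),
        tauCount_append, tauCount_append, tauCount_xiWord, tauCount_single_tau, ih]
      omega

/-! ### eta of canonWord -/

lemma eta_canonWord (m : ℕ) (u : MonP c) (p : Fin d → ℕ)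
    (hu : ∀ v ∈ u.support, v.2 < m) (hle : ∀ j, p j ≤ m)
    (hpair : ∀ j k : Fin d, j < k → p j ≠ 0 → p j < p k) :
    eta (canonWord c d m u p) = (u, p) := by
  induction m generalizing u p with
  | zero =>
      rw [canonWord_zero]
      have hu0 : u = 0 := by
        ext v
        by_contra h
        exact absurd (hu v (Finsupp.mem_support_iff.mpr h)) (by omega)
      have hp0 : p = fun _ => 0 := funext fun j => Nat.le_zero.mp (hle j)
      rw [eta_nil, hu0, hp0]
  | succ m ih =>
      have hu' : ∀ v ∈ (downShift u).support, v.2 < m := by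
        intro v hv
        obtain ⟨i, l⟩ := v
        rw [Finsupp.mem_support_iff, downShift_apply] at hv
        have h2 := hu (i, l + 1) (Finsupp.mem_support_iff.mpr hv)
        have h3 : l + 1 < m + 1 := h2
        exact Nat.lt_of_succ_lt_succ h3
      have hle' : ∀ j, p j - 1 ≤ m := by
        intro j
        have := hle j
        omega
      have hpair' : ∀ j k : Fin d, j < k → p j - 1 ≠ 0 → p j - 1 < p k - 1 := by
        intro j k hjk h0
        have h2 := hpair j k hjk (by omega)
        omega
      rw [canonWord_succ_eq m u p (downShift u) (fun j => p j - 1)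
        (fun i k => downShift_apply u i k) (iotaIdx_sub p),
        List.append_assoc, eta_xiWord_append, List.singleton_append, eta_tau]
      rw [ih (downShift u) (fun j => p j - 1) hu' hle' hpair']
      rw [Prod.mk.injEq]
      constructor
      · show embed c (fun i => u (i, 0)) + shiftMon (downShift u) = u
        ext v
        obtain ⟨i, l⟩ := v
        rw [Finsupp.add_apply, embed_apply]
        cases l with
        | zero => rw [if_pos rfl, shiftMon_apply_zero, add_zero]
        | succ l =>
            rw [if_neg (Nat.succ_ne_zero l), shiftMon_apply_succ, downShift_apply, zero_add]
      · show (fun k : Fin d => if 1 ≤ (iotaIdx p 0 : ℕ) ∧ (iotaIdx p 0 : ℕ) ≤ (k : ℕ) + 1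
            then p k - 1 + 1 else p k - 1) = p
        funext k
        by_cases hall : ∀ j, p j = 0
        · rw [iotaIdx_zero p hall 0]
          have h0 : ((0 : Fin (d + 1)) : ℕ) = 0 := rfl
          rw [if_neg (by omega), hall k]
        · push_neg at hall
          obtain ⟨j1, hj1⟩ := hall
          have hne : (Finset.univ.filter fun j : Fin d => 0 + 1 ≤ p j).Nonempty :=
            ⟨j1, Finset.mem_filter.mpr ⟨Finset.mem_univ _, by omega⟩⟩
          have hiota : iotaIdx p 0
              = ((Finset.univ.filter fun j : Fin d => 0 + 1 ≤ p j).min' hne).succ := by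
            rw [iotaIdx, dif_pos hne]
          set j0 := (Finset.univ.filter fun j : Fin d => 0 + 1 ≤ p j).min' hne with hj0
          have hj0p : 1 ≤ p j0 := by
            have := Finset.min'_mem _ hne
            rw [← hj0] at this
            simp only [Finset.mem_filter, Finset.mem_univ, true_and] at this
            omega
          rw [hiota]
          simp only [Fin.val_succ]
          by_cases hk : (j0 : ℕ) ≤ (k : ℕ)
          · rw [if_pos ⟨by omega, by omega⟩]
            have hpk : 1 ≤ p k := by
              rcases eq_or_lt_of_le hk with heq | hlt
              · have : j0 = k := Fin.ext heq
                rw [← this]; exact hj0p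
              · have := hpair j0 k (Fin.lt_def.mpr hlt) (by omega)
                omega
            omega
          · rw [if_neg (by omega)]
            have hnk : ¬ (1 ≤ p k) := by
              intro hge
              have hmm : k ∈ Finset.univ.filter fun j : Fin d => 0 + 1 ≤ p j := by
                simp only [Finset.mem_filter, Finset.mem_univ, true_and]; omega
              have := Finset.min'_le _ _ hmm
              rw [← hj0] at this
              exact hk (Fin.le_def.mp this)
            omega

/-! ### language lemmas -/

lemma flatten_map_singleton {α : Type _} (w : List α) : (w.map fun a => [a]).flatten = w := by
  induction w with
  | nil => rfl
  | cons a w ih => simp [ih]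

lemma mem_letter_star {S : Set (Letter c d)} {w : List (Letter c d)} :
    w ∈ (letterLang S)∗ ↔ ∀ a ∈ w, a ∈ S := by
  rw [Language.mem_kstar]
  constructor
  · rintro ⟨L, rfl, hL⟩ a ha
    rw [List.mem_flatten] at ha
    obtain ⟨l, hl, hal⟩ := ha
    obtain ⟨b, hb, rfl⟩ := hL l hl
    rw [List.mem_singleton] at hal
    subst hal
    exact hb
  · intro h
    refine ⟨w.map fun a => [a], (flatten_map_singleton w).symm, ?_⟩
    intro y hy
    rw [List.mem_map] at hy
    obtain ⟨a, ha, rfl⟩ := hy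
    exact ⟨a, h a ha, rfl⟩

lemma simple_iff_xiSet {v : List (Letter c d)} :
    SimpleWord v ↔ ∀ a ∈ v, a ∈ xiSet c d := by
  constructor
  · intro h a ha
    obtain ⟨i, rfl⟩ := h a ha
    exact ⟨i, rfl⟩
  · intro h a ha
    obtain ⟨i, hi⟩ := h a ha
    exact ⟨i, hi.symm⟩

lemma llbar_cases {j : Fin (d + 1)} {w : List (Letter c d)} (h : w ∈ LLbar c d j) :
    w = [] ∨ ∃ v rest, w = v ++ [Letter.tau j] ++ rest ∧ SimpleWord v ∧ rest ∈ LLbar c d j := by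
  rw [LLbar, Language.mem_kstar] at h
  obtain ⟨L, rfl, hL⟩ := h
  cases L with
  | nil => exact Or.inl rfl
  | cons x L =>
      right
      have hx := hL x List.mem_cons_self
      rw [Language.mem_mul] at hx
      obtain ⟨v, hv, b, hb, rfl⟩ := hx
      change b = _ at hb
      subst hb
      refine ⟨v, L.flatten, by rw [List.flatten_cons], ?_, ?_⟩
      · exact simple_iff_xiSet.mpr (mem_letter_star.mp hv)
      · rw [LLbar, Language.mem_kstar]
        exact ⟨L, rfl, fun y hy => hL y (List.mem_cons_of_mem _ hy)⟩

lemma llbar_cons {j : Fin (d + 1)} {v rest : List (Letter c d)} (hv : SimpleWord v)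
    (h : rest ∈ LLbar c d j) : v ++ [Letter.tau j] ++ rest ∈ LLbar c d j := by
  rw [LLbar, Language.mem_kstar] at h ⊢
  obtain ⟨L, rfl, hL⟩ := h
  refine ⟨(v ++ [Letter.tau j]) :: L, by rw [List.flatten_cons], ?_⟩
  intro y hy
  rcases List.mem_cons.mp hy with rfl | hy
  · exact Language.append_mem_mul (mem_letter_star.mpr (simple_iff_xiSet.mp hv)) rfl
  · exact hL y hy

/-! ### the tail languages `Lt` -/

def Lt (c d : ℕ) (r : ℕ) : Language (Letter c d) :=
  (((List.finRange d).drop (d - r)).map fun j : Fin d =>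
    LL c d j.succ * ({[Letter.tau j.succ]} : Language (Letter c d))).prod * LLbar c d 0

lemma Lt_d : Lt c d d = LFull c d := by
  rw [Lt, LFull, Nat.sub_self, List.drop_zero]

lemma Lt_zero : Lt c d 0 = LLbar c d 0 := by
  rw [Lt, Nat.sub_zero, List.drop_eq_nil_of_le (le_of_eq (List.length_finRange (n := d))),
    List.map_nil, List.prod_nil, one_mul]

lemma Lt_succ (r : ℕ) (h : r + 1 ≤ d) :
    Lt c d (r + 1) =
      (LL c d (⟨d - r - 1, sub1_lt h⟩ : Fin d).succ *
        ({[Letter.tau (⟨d - r - 1, sub1_lt h⟩ : Fin d).succ]} : Language (Letter c d))) *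
        Lt c d r := by
  have hlt : d - (r + 1) < (List.finRange d).length := by
    rw [List.length_finRange]; omega
  have hj : ((List.finRange d)[d - (r + 1)]'hlt : Fin d) = ⟨d - r - 1, sub1_lt h⟩ := by
    apply Fin.ext
    rw [List.getElem_finRange]
    simp only [Fin.coe_cast]
    show d - (r + 1) = d - r - 1
    omega
  have he : d - (r + 1) + 1 = d - r := by omega
  rw [Lt, List.drop_eq_getElem_cons hlt, List.map_cons, List.prod_cons, hj, mul_assoc, he, ← Lt]

lemma first_tau (t : Fin (d + 1)) :
    ∀ x : List (Letter c d), (∀ a ∈ x, a ∈ xiSet c d ∪ {Letter.tau t}) →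
    SimpleWord x ∨ ∃ v x', x = v ++ [Letter.tau t] ++ x' ∧ SimpleWord v ∧
      ∀ a ∈ x', a ∈ xiSet c d ∪ {Letter.tau t} := by
  intro x
  induction x with
  | nil => intro _; left; intro a ha; exact absurd ha List.not_mem_nil
  | cons a x ih =>
      intro hx
      have hmem := hx a List.mem_cons_self
      rw [Set.mem_union] at hmem
      rcases hmem with hxi | htau
      · obtain ⟨i, rfl⟩ := hxi
        rcases ih (fun b hb => hx b (List.mem_cons_of_mem _ hb)) with hs | ⟨v, x', rfl, hv, hx'⟩
        · left
          intro b hb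
          rcases List.mem_cons.mp hb with rfl | hb
          · exact ⟨i, rfl⟩
          · exact hs b hb
        · right
          refine ⟨Letter.xi i :: v, x', rfl, ?_, hx'⟩
          intro b hb
          rcases List.mem_cons.mp hb with rfl | hb
          · exact ⟨i, rfl⟩
          · exact hv b hb
      · right
        rw [Set.mem_singleton_iff] at htau
        subst htau
        exact ⟨[], x, rfl, fun b hb => absurd hb List.not_mem_nil,
          fun b hb => hx b (List.mem_cons_of_mem _ hb)⟩

lemma lt_succ_cases {r : ℕ} {w : List (Letter c d)} (h : r + 1 ≤ d) (hw : w ∈ Lt c d (r + 1)) :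
    ∃ v rest, w = v ++ [Letter.tau (⟨d - r, sub_lt_succ d r⟩ : Fin (d + 1))] ++ rest ∧ SimpleWord v ∧
      (rest ∈ Lt c d (r + 1) ∨ rest ∈ Lt c d r) := by
  have htt : ((⟨d - r - 1, sub1_lt h⟩ : Fin d)).succ = (⟨d - r, sub_lt_succ d r⟩ : Fin (d + 1)) := by
    apply Fin.ext
    simp only [Fin.val_succ]
    omega
  rw [Lt_succ r h, htt] at hw
  rw [Language.mem_mul] at hw
  obtain ⟨ab, hab, b, hb, rfl⟩ := hw
  rw [Language.mem_mul] at hab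
  obtain ⟨x, hx, tt, htt2, rfl⟩ := hab
  change tt = _ at htt2
  subst htt2
  rw [LL] at hx
  rw [mem_letter_star] at hx
  rcases first_tau _ x hx with hs | ⟨v, x', rfl, hv, hx'⟩
  · exact ⟨x, b, rfl, hs, Or.inr hb⟩
  · refine ⟨v, x' ++ [Letter.tau (⟨d - r, sub_lt_succ d r⟩ : Fin (d + 1))] ++ b, ?_, hv, Or.inl ?_⟩
    · simp [List.append_assoc]
    · rw [Lt_succ r h, htt]
      exact Language.append_mem_mul
        (Language.append_mem_mul (mem_letter_star.mpr hx') rfl) hb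

/-! ### standardness decomposition -/

lemma standard_prefix {v rest : List (Letter c d)} {t : Fin (d + 1)}
    (h : Standard (v ++ [Letter.tau t] ++ rest)) : List.Chain' (Rel c d) v := by
  rw [standard_def, List.append_assoc, List.Chain', List.isChain_append] at h
  exact h.1

lemma standard_suffix {v rest : List (Letter c d)} {t : Fin (d + 1)}
    (h : Standard (v ++ [Letter.tau t] ++ rest)) : Standard rest := by
  rw [standard_def, List.append_assoc, List.Chain', List.isChain_append] at h
  exact List.IsChain.tail h.2.1

/-! ### the step lemma -/

lemma step {t : Fin (d + 1)} {s s'' : ℕ} {v w'' : List (Letter c d)}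
    (hv : SimpleWord v) (hstd : Standard (v ++ [Letter.tau t] ++ w''))
    (Ht : (1 ≤ (t : ℕ) ∧ s = (t : ℕ) ∧ ((t : ℕ) = s'' ∨ (t : ℕ) + 1 = s''))
        ∨ ((t : ℕ) = 0 ∧ s = d + 1 ∧ s'' = d + 1))
    (H0 : ∀ j : Fin d, (eta w'').2 j ≠ 0 ↔ s'' ≤ (j : ℕ) + 1)
    (H1 : ∀ j k : Fin d, j < k → (eta w'').2 j ≠ 0 → (eta w'').2 j < (eta w'').2 k)
    (H2 : ∀ j, (eta w'').2 j ≤ tauCount w'')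
    (H3 : ∀ x ∈ (eta w'').1.support, x.2 < tauCount w'')
    (H4 : w'' = canonWord c d (tauCount w'') (eta w'').1 (eta w'').2) :
    (∀ j : Fin d, (eta (v ++ [Letter.tau t] ++ w'')).2 j ≠ 0 ↔ s ≤ (j : ℕ) + 1) ∧
    (∀ j k : Fin d, j < k → (eta (v ++ [Letter.tau t] ++ w'')).2 j ≠ 0 →
      (eta (v ++ [Letter.tau t] ++ w'')).2 j < (eta (v ++ [Letter.tau t] ++ w'')).2 k) ∧
    (∀ j, (eta (v ++ [Letter.tau t] ++ w'')).2 j ≤ tauCount (v ++ [Letter.tau t] ++ w'')) ∧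
    (∀ x ∈ (eta (v ++ [Letter.tau t] ++ w'')).1.support,
      x.2 < tauCount (v ++ [Letter.tau t] ++ w'')) ∧
    v ++ [Letter.tau t] ++ w'' =
      canonWord c d (tauCount (v ++ [Letter.tau t] ++ w''))
        (eta (v ++ [Letter.tau t] ++ w'')).1 (eta (v ++ [Letter.tau t] ++ w'')).2 := by
  obtain ⟨a, hva, hetav⟩ := simple_standard_eq_xiWord hv (standard_prefix hstd)
  set u'' := (eta w'').1 with hu''def
  set p'' := (eta w'').2 with hp''def
  set m'' := tauCount w'' with hm''def
  have hwfst : (eta (v ++ [Letter.tau t] ++ w'')).1 = embed c a + shiftMon u'' := by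
    rw [List.append_assoc, hetav, List.singleton_append, eta_tau]
    rfl
  have hwsnd : (eta (v ++ [Letter.tau t] ++ w'')).2
      = fun k : Fin d => if 1 ≤ (t : ℕ) ∧ (t : ℕ) ≤ (k : ℕ) + 1 then p'' k + 1 else p'' k := by
    rw [List.append_assoc, hetav, List.singleton_append, eta_tau]
    rfl
  have hq : ∀ k : Fin d, (eta (v ++ [Letter.tau t] ++ w'')).2 k
      = if 1 ≤ (t : ℕ) ∧ (t : ℕ) ≤ (k : ℕ) + 1 then p'' k + 1 else p'' k :=
    fun k => congrFun hwsnd k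
  have htau : tauCount (v ++ [Letter.tau t] ++ w'') = m'' + 1 := by
    rw [tauCount_append, tauCount_append, hva, tauCount_xiWord, tauCount_single_tau]
    omega
  have hq0 : ∀ j : Fin d, (eta (v ++ [Letter.tau t] ++ w'')).2 j ≠ 0 ↔ s ≤ (j : ℕ) + 1 := by
    intro j
    rw [hq j]
    rcases Ht with ⟨ht1, hts, hts''⟩ | ⟨ht0, hts, hts''⟩
    · by_cases hj : (t : ℕ) ≤ (j : ℕ) + 1
      · rw [if_pos ⟨ht1, hj⟩]
        constructor
        · intro _; omega
        · intro _; omega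
      · rw [if_neg (by omega)]
        have hp0 : p'' j = 0 := by
          by_contra hne
          have := (H0 j).mp hne
          omega
        constructor
        · intro hh; exact absurd hp0 hh
        · intro hh; omega
    · rw [if_neg (by omega)]
      have hp0 : p'' j = 0 := by
        by_contra hne
        have := (H0 j).mp hne
        have := j.isLt
        omega
      constructor
      · intro hh; exact absurd hp0 hh
      · intro hh; have := j.isLt; omega
  refine ⟨hq0, ?_, ?_, ?_, ?_⟩
  · intro j k hjk hne
    have hjkv : (j : ℕ) < (k : ℕ) := Fin.lt_def.mp hjk
    rw [hq j] at hne ⊢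
    rw [hq k]
    rcases Ht with ⟨ht1, hts, hts''⟩ | ⟨ht0, hts, hts''⟩
    · by_cases hj : (t : ℕ) ≤ (j : ℕ) + 1
      · rw [if_pos ⟨ht1, hj⟩] at hne ⊢
        rw [if_pos ⟨ht1, by omega⟩]
        by_cases hz : p'' j = 0
        · have hk1 : p'' k ≠ 0 := (H0 k).mpr (by omega)
          omega
        · have := H1 j k hjk hz
          omega
      · rw [if_neg (by omega)] at hne
        have hp0 : p'' j = 0 := by
          by_contra hz
          have := (H0 j).mp hz
          omega
        exact absurd hp0 hne
    · rw [if_neg (by omega)] at hne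
      have hp0 : p'' j = 0 := by
        by_contra hz
        have := (H0 j).mp hz
        have := j.isLt
        omega
      exact absurd hp0 hne
  · intro j
    rw [hq j, htau]
    have := H2 j
    split_ifs <;> omega
  · intro x hx
    rw [htau]
    rw [Finsupp.mem_support_iff, hwfst] at hx
    obtain ⟨i, l⟩ := x
    cases l with
    | zero => omega
    | succ l =>
        rw [Finsupp.add_apply, embed_apply, if_neg (Nat.succ_ne_zero l),
          shiftMon_apply_succ, zero_add] at hx
        have := H3 (i, l) (Finsupp.mem_support_iff.mpr hx)
        simp only at this ⊢
        omega
  · rw [htau]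
    have hA : (fun i : Fin c => (eta (v ++ [Letter.tau t] ++ w'')).1 (i, 0)) = a := by
      funext i
      rw [hwfst, Finsupp.add_apply, embed_apply, if_pos rfl, shiftMon_apply_zero, add_zero]
    have hC : p'' = fun j : Fin d => (eta (v ++ [Letter.tau t] ++ w'')).2 j - 1 := by
      funext j
      rw [hq j]
      rcases Ht with ⟨ht1, hts, hts''⟩ | ⟨ht0, hts, hts''⟩
      · by_cases hj : (t : ℕ) ≤ (j : ℕ) + 1
        · rw [if_pos ⟨ht1, hj⟩]; omega
        · rw [if_neg (by omega)]
          have hp0 : p'' j = 0 := by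
            by_contra hne
            have := (H0 j).mp hne
            omega
          omega
      · rw [if_neg (by omega)]
        have hp0 : p'' j = 0 := by
          by_contra hne
          have := (H0 j).mp hne
          have := j.isLt
          omega
        omega
    have hB : iotaIdx (eta (v ++ [Letter.tau t] ++ w'')).2 0 = t := by
      rcases Ht with ⟨ht1, hts, hts''⟩ | ⟨ht0, hts, hts''⟩
      · refine iotaIdx_eq t ht1 _ ?_
        intro j
        have := hq0 j
        omega
      · have hall : ∀ j, (eta (v ++ [Letter.tau t] ++ w'')).2 j = 0 := by
          intro j
          have := hq0 j
          have := j.isLt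
          omega
        rw [iotaIdx_zero _ hall 0]
        apply Fin.ext
        simp only [Fin.val_zero]
        omega
    rw [canonWord_succ_eq m'' (eta (v ++ [Letter.tau t] ++ w'')).1
        (eta (v ++ [Letter.tau t] ++ w'')).2 u'' p''
        (fun i k => by
          rw [hwfst, Finsupp.add_apply, embed_apply, if_neg (Nat.succ_ne_zero k),
            shiftMon_apply_succ, zero_add])
        (fun k => by rw [hC, iotaIdx_sub]),
      hA, hB, ← hva, ← H4]

/-! ### the base case -/

lemma base_case :
    (∀ j : Fin d, (eta ([] : List (Letter c d))).2 j ≠ 0 ↔ d + 1 - 0 ≤ (j : ℕ) + 1) ∧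
    (∀ j k : Fin d, j < k → (eta ([] : List (Letter c d))).2 j ≠ 0 →
      (eta ([] : List (Letter c d))).2 j < (eta ([] : List (Letter c d))).2 k) ∧
    (∀ j, (eta ([] : List (Letter c d))).2 j ≤ tauCount ([] : List (Letter c d))) ∧
    (∀ x ∈ (eta ([] : List (Letter c d))).1.support,
      x.2 < tauCount ([] : List (Letter c d))) ∧
    ([] : List (Letter c d)) = canonWord c d (tauCount ([] : List (Letter c d)))
      (eta ([] : List (Letter c d))).1 (eta ([] : List (Letter c d))).2 := by
  refine ⟨?_, ?_, ?_, ?_, ?_⟩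
  · intro j
    have := j.isLt
    show (0 : ℕ) ≠ 0 ↔ _
    omega
  · intro j k _ hne
    exact absurd rfl hne
  · intro j
    exact le_refl 0
  · intro x hx
    rw [eta_nil] at hx
    simp at hx
  · show ([] : List (Letter c d)) = canonWord c d 0 _ _
    rw [canonWord_zero]

/-! ### the main induction (direction B) -/

lemma keyB : ∀ (n : ℕ) (w : List (Letter c d)) (r : ℕ), w.length ≤ n → r ≤ d →
    w ∈ Lt c d r → Standard w →
    (∀ j : Fin d, (eta w).2 j ≠ 0 ↔ d + 1 - r ≤ (j : ℕ) + 1) ∧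
    (∀ j k : Fin d, j < k → (eta w).2 j ≠ 0 → (eta w).2 j < (eta w).2 k) ∧
    (∀ j, (eta w).2 j ≤ tauCount w) ∧
    (∀ x ∈ (eta w).1.support, x.2 < tauCount w) ∧
    w = canonWord c d (tauCount w) (eta w).1 (eta w).2 := by
  intro n
  induction n with
  | zero =>
      intro w r hlen hr hmem hstd
      have hwnil : w = [] := List.length_eq_zero_iff.mp (Nat.le_zero.mp hlen)
      subst hwnil
      cases r with
      | zero => exact base_case
      | succ r =>
          obtain ⟨v, rest, habs, -, -⟩ := lt_succ_cases hr hmem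
          exact absurd habs (by simp)
  | succ n ih =>
      intro w r hlen hr hmem hstd
      cases r with
      | zero =>
          rw [Lt_zero] at hmem
          rcases llbar_cases hmem with rfl | ⟨v, rest, rfl, hv, hrest⟩
          · exact base_case
          · have hlenr : rest.length ≤ n := by
              rw [List.length_append, List.length_append] at hlen
              simp only [List.length_singleton] at hlen
              omega
            obtain ⟨K0, K1, K2, K3, K4⟩ := ih rest 0 hlenr (Nat.zero_le d)
              (by rw [Lt_zero]; exact hrest) (standard_suffix hstd)
            exact step (s := d + 1 - 0) (s'' := d + 1 - 0) hv hstd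
              (Or.inr ⟨rfl, by omega, by omega⟩) K0 K1 K2 K3 K4
      | succ r =>
          obtain ⟨v, rest, rfl, hv, hrest⟩ := lt_succ_cases hr hmem
          have hlenr : rest.length ≤ n := by
            rw [List.length_append, List.length_append] at hlen
            simp only [List.length_singleton] at hlen
            omega
          have htv : ((⟨d - r, sub_lt_succ d r⟩ : Fin (d + 1)) : ℕ) = d - r := rfl
          rcases hrest with hrest | hrest
          · obtain ⟨K0, K1, K2, K3, K4⟩ := ih rest (r + 1) hlenr hr hrest
              (standard_suffix hstd)
            exact step (s := d + 1 - (r + 1)) (s'' := d + 1 - (r + 1)) hv hstd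
              (Or.inl ⟨by omega, by omega, Or.inl (by omega)⟩) K0 K1 K2 K3 K4
          · obtain ⟨K0, K1, K2, K3, K4⟩ := ih rest r hlenr (by omega) hrest
              (standard_suffix hstd)
            exact step (s := d + 1 - (r + 1)) (s'' := d + 1 - r) hv hstd
              (Or.inl ⟨by omega, by omega, Or.inr (by omega)⟩) K0 K1 K2 K3 K4

/-! ### membership of canonWord (direction A) -/

lemma canonWord_mem : ∀ (m r : ℕ) (u : MonP c) (p : Fin d → ℕ), r ≤ d →
    (∀ j : Fin d, p j ≠ 0 ↔ d + 1 - r ≤ (j : ℕ) + 1) →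
    (∀ j k : Fin d, j < k → p j ≠ 0 → p j < p k) →
    (∀ j, p j ≤ m) →
    canonWord c d m u p ∈ Lt c d r := by
  intro m
  induction m with
  | zero =>
      intro r u p hr h0 hpair hle
      have hr0 : r = 0 := by
        by_contra hrne
        have hd1 : 1 ≤ d := by omega
        have hjlt : d - 1 < d := by omega
        have hj := (h0 ⟨d - 1, hjlt⟩).mpr (by show d + 1 - r ≤ (d - 1) + 1; omega)
        exact hj (Nat.le_zero.mp (hle _))
      subst hr0
      rw [canonWord_zero, Lt_zero]
      exact Language.nil_mem_kstar _
  | succ m ih =>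
      intro r u p hr h0 hpair hle
      cases r with
      | zero =>
          have hall : ∀ j, p j = 0 := by
            intro j
            by_contra hne
            have := (h0 j).mp hne
            have := j.isLt
            omega
          rw [canonWord_succ_eq m u p (downShift u) (fun j => p j - 1)
            (fun i k => downShift_apply u i k) (iotaIdx_sub p), Lt_zero, iotaIdx_zero p hall 0]
          apply llbar_cons (xiWord_simple _)
          rw [← Lt_zero]
          refine ih 0 _ _ (Nat.zero_le d) ?_ ?_ ?_
          · intro j
            have := hall j
            have := j.isLt
            constructor
            · intro hh; omega
            · intro hh; omega
          · intro j k hjk hne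
            have := hall j
            omega
          · intro j
            have := hall j
            omega
      | succ r =>
          have htv : 1 ≤ d - r := by omega
          have ht : iotaIdx p 0 = (⟨d - r, sub_lt_succ d r⟩ : Fin (d + 1)) := by
            refine iotaIdx_eq _ (by show 1 ≤ d - r; omega) _ ?_
            intro j
            have hj := h0 j
            show 1 ≤ p j ↔ d - r ≤ (j : ℕ) + 1
            omega
          have htt : ((⟨d - r - 1, sub1_lt hr⟩ : Fin d)).succ
              = (⟨d - r, sub_lt_succ d r⟩ : Fin (d + 1)) := by
            apply Fin.ext
            simp only [Fin.val_succ]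
            omega
          have hjmlt : d - r - 1 < d := by omega
          have hjmne : p ⟨d - r - 1, hjmlt⟩ ≠ 0 :=
            (h0 ⟨d - r - 1, hjmlt⟩).mpr (by show d + 1 - (r + 1) ≤ (d - r - 1) + 1; omega)
          by_cases hone : p ⟨d - r - 1, hjmlt⟩ = 1
          · rw [canonWord_succ_eq m u p (downShift u) (fun j => p j - 1)
              (fun i k => downShift_apply u i k) (iotaIdx_sub p), ht, Lt_succ r hr, htt]
            refine Language.append_mem_mul (Language.append_mem_mul ?_ rfl) ?_
            · exact mem_letter_star.mpr fun a ha =>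
                Set.mem_union_left _ (simple_iff_xiSet.mp (xiWord_simple _) a ha)
            · refine ih r _ _ (by omega) ?_ ?_ ?_
              · intro j
                have hj0 := h0 j
                constructor
                · intro hne
                  by_cases hjj : (j : ℕ) = d - r - 1
                  · have hje : j = ⟨d - r - 1, hjmlt⟩ := Fin.ext hjj
                    rw [hje] at hne
                    omega
                  · omega
                · intro hge
                  have hlt : (⟨d - r - 1, hjmlt⟩ : Fin d) < j := by
                    rw [Fin.lt_def]
                    show d - r - 1 < (j : ℕ)
                    omega
                  have := hpair _ j hlt hjmne
                  omega
              · intro j k hjk hne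
                have h2 := hpair j k hjk (by omega)
                omega
              · intro j
                have := hle j
                omega
          · have hrest : canonWord c d m (downShift u) (fun j => p j - 1) ∈ Lt c d (r + 1) := by
              refine ih (r + 1) _ _ hr ?_ ?_ ?_
              · intro j
                have hj0 := h0 j
                constructor
                · intro hne
                  omega
                · intro hge
                  by_cases hjj : (j : ℕ) = d - r - 1
                  · have hje : j = ⟨d - r - 1, hjmlt⟩ := Fin.ext hjj
                    rw [hje]
                    omega
                  · have hlt : (⟨d - r - 1, hjmlt⟩ : Fin d) < j := by
                      rw [Fin.lt_def]
                      show d - r - 1 < (j : ℕ)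
                      omega
                    have := hpair _ j hlt hjmne
                    omega
              · intro j k hjk hne
                have h2 := hpair j k hjk (by omega)
                omega
              · intro j
                have := hle j
                omega
            rw [Lt_succ r hr, htt, Language.mem_mul] at hrest
            obtain ⟨ab, hab, b, hb, heq⟩ := hrest
            rw [Language.mem_mul] at hab
            obtain ⟨x, hx, tt, htt2, rfl⟩ := hab
            change tt = _ at htt2
            subst htt2
            rw [canonWord_succ_eq m u p (downShift u) (fun j => p j - 1)
              (fun i k => downShift_apply u i k) (iotaIdx_sub p), ht, ← heq,
              Lt_succ r hr, htt]
            have hxl : ∀ a ∈ xiWord c d (fun i : Fin c => u (i, 0)) ++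
                [Letter.tau (⟨d - r, sub_lt_succ d r⟩ : Fin (d + 1))] ++ x,
                a ∈ xiSet c d ∪ {Letter.tau (⟨d - r, sub_lt_succ d r⟩ : Fin (d + 1))} := by
              intro a ha
              rcases List.mem_append.mp ha with ha | ha
              · rcases List.mem_append.mp ha with ha | ha
                · exact Set.mem_union_left _ (simple_iff_xiSet.mp (xiWord_simple _) a ha)
                · rw [List.mem_singleton] at ha
                  subst ha
                  exact Set.mem_union_right _ rfl
              · exact mem_letter_star.mp hx a ha
            have hshape : xiWord c d (fun i : Fin c => u (i, 0)) ++
                [Letter.tau (⟨d - r, sub_lt_succ d r⟩ : Fin (d + 1))] ++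
                (x ++ [Letter.tau (⟨d - r, sub_lt_succ d r⟩ : Fin (d + 1))] ++ b)
                = (xiWord c d (fun i : Fin c => u (i, 0)) ++
                  [Letter.tau (⟨d - r, sub_lt_succ d r⟩ : Fin (d + 1))] ++ x) ++
                  [Letter.tau (⟨d - r, sub_lt_succ d r⟩ : Fin (d + 1))] ++ b := by
              simp [List.append_assoc]
            rw [hshape]
            exact Language.append_mem_mul
              (Language.append_mem_mul (mem_letter_star.mpr hxl) rfl) hb

end MuAux

/-- **The bijection `μ_m : 𝓛_std^(m) → Mon(F_m)`** (Proposition 3.3).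
For every `m ≥ 0`, the map `w ↦ η(w)` is a bijection from the set `𝓛_std^(m)` of standard
words of `𝓛` with exactly `m` τ-letters onto the set of monomials of `F_m` (hence `μ` is
a bijection `𝓛_std → Mon(F)`).  More precisely, the unique word `w ∈ 𝓛_std^(m)` mapping
to the monomial `x^u e_π = x_{•,1}^{u_1} ⋯ x_{•,m}^{u_m} e_π` is
`w = ξ^{u_1} τ_{ι(1)} ξ^{u_2} τ_{ι(2)} ⋯ ξ^{u_m} τ_{ι(m)}`, where `ι(k) = 0` if
`π(d) < k ≤ m` and `ι(k) = j` if `π(j-1) < k ≤ π(j)` (with `π(0) = 0`). -/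
theorem mu_bijection (c d : ℕ) (hc : 1 ≤ c) (m : ℕ) :
    Set.BijOn (fun w => eta w)
      {w : List (Letter c d) | w ∈ LStd c d ∧ tauCount w = m} (MonFSet c d m) ∧
    ∀ q ∈ MonFSet c d m,
      canonWord c d m q.1 q.2 ∈ LStd c d ∧
      tauCount (canonWord c d m q.1 q.2) = m ∧
      eta (canonWord c d m q.1 q.2) = q := by
  classical
  have keyA : ∀ q ∈ MonFSet c d m,
      canonWord c d m q.1 q.2 ∈ LStd c d ∧ tauCount (canonWord c d m q.1 q.2) = m ∧
      eta (canonWord c d m q.1 q.2) = q := by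
    rintro ⟨u, p⟩ ⟨hsup, hmono, hbd⟩
    have h0 : ∀ j : Fin d, p j ≠ 0 ↔ d + 1 - d ≤ (j : ℕ) + 1 := by
      intro j
      have h1 : 1 ≤ p j := (hbd j).1
      constructor <;> intro <;> omega
    have hpair : ∀ j k : Fin d, j < k → p j ≠ 0 → p j < p k := fun j k hjk _ => hmono hjk
    have hle : ∀ j, p j ≤ m := fun j => ((hbd j).2 : p j ≤ m)
    refine ⟨⟨?_, MuAux.standard_canonWord m u p⟩, MuAux.tauCount_canonWord m u p, ?_⟩
    · rw [← MuAux.Lt_d]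
      exact MuAux.canonWord_mem m d u p le_rfl h0 hpair hle
    · exact MuAux.eta_canonWord m u p hsup hle hpair
  refine ⟨?_, keyA⟩
  have keyB' : ∀ w ∈ {w : List (Letter c d) | w ∈ LStd c d ∧ tauCount w = m},
      (eta w ∈ MonFSet c d m) ∧ w = canonWord c d m (eta w).1 (eta w).2 := by
    rintro w ⟨⟨hfull, hstd⟩, hcount⟩
    obtain ⟨h0, hpair, hle, hsup, hcanon⟩ :=
      MuAux.keyB w.length w d le_rfl le_rfl (by rw [MuAux.Lt_d]; exact hfull) hstd
    rw [hcount] at hle hsup hcanon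
    refine ⟨⟨hsup, ?_, ?_⟩, hcanon⟩
    · intro j k hjk
      refine hpair j k hjk ?_
      have := (h0 j).mpr (by omega)
      exact this
    · intro k
      have h1 := (h0 k).mpr (by omega)
      exact ⟨by omega, hle k⟩
  refine ⟨fun w hw => (keyB' w hw).1, fun w1 h1 w2 h2 heq => ?_, fun q hq => ?_⟩
  · have e1 := (keyB' w1 h1).2
    have e2 := (keyB' w2 h2).2
    simp only at heq
    rw [e1, e2, heq]
  · obtain ⟨hstd, hcnt, heta⟩ := keyA q hq
    exact ⟨canonWord c d m q.1 q.2, ⟨hstd, hcnt⟩, heta⟩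

end
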